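/- There exists a reflexive, transitive, strongly convergent frame with constant domain, a predicate interpretation, and a world w such that [K^MS_FS] holds at w but fails at some R-successor of w. That is, positive introspection [K^MS_FS]^x φ → [K][K^MS_FS]^x φ is not valid on the class of S4.2-constant-domain models. -/
import Mathlib


def RB {W : Type*} (R : W → W → Prop) (w u : W) : Prop := ∀ v, R w v → R v u

theorem KMSFS_not_pos_introspective :
    ∃ (W : Type) (R : W → W → Prop) (D : Type) (P : D → W → Prop) (w : W),
      Nonempty D ∧
      (∀ x, R x x) ∧ (∀ x y z, R x y → R y z → R x z) ∧
      (∀ x, ∃ u, ∀ v, R x v → R v u) ∧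
      ((∃ a, ∀ v, R w v → P a v) ∧ (∀ b, (∀ u, RB R w u → P b u) → P b w)) ∧
      (∃ v, R w v ∧
        ¬ ((∃ a, ∀ x, R v x → P a x) ∧ (∀ b, (∀ u, RB R v u → P b u) → P b v))) := by
  refine ⟨Fin 3, (· ≤ ·), Fin 2, fun d i => d = 0 ∨ i ≠ 1, 0, ?_⟩
  refine ⟨⟨0⟩, ?_⟩
  unfold RB
  decide
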